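/- arXiv:2103.15594 — 4 statements merged into one kernel-verified Lean document; each statement's English description precedes it below -/
import Mathlib

section
/- For 0 < α ≤ 1, the equilibrium points of the vector field Σ_α(x,y,z) = (xz, -αyz, αy² - x²) on the unit sphere S² are exactly the four points (±√(α/(1+α)), ±√(1/(1+α)), 0) and the two poles (0,0,±1). -/
/-- For `0 < α ≤ 1`, the equilibria of `Σ_α(x,y,z) = (x*z, -α*y*z, α*y² - x²)`
on the unit sphere are exactly `(±√(α/(1+α)), ±√(1/(1+α)), 0)` and `(0,0,±1)`. -/
theorem stmt2 (α : ℝ) (hα : 0 < α) (hα1 : α ≤ 1) (x y z : ℝ) :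
    (x ^ 2 + y ^ 2 + z ^ 2 = 1 ∧
      x * z = 0 ∧ -α * y * z = 0 ∧ α * y ^ 2 - x ^ 2 = 0) ↔
    ((x = Real.sqrt (α / (1 + α)) ∨ x = -Real.sqrt (α / (1 + α))) ∧
      (y = Real.sqrt (1 / (1 + α)) ∨ y = -Real.sqrt (1 / (1 + α))) ∧ z = 0) ∨
    (x = 0 ∧ y = 0 ∧ (z = 1 ∨ z = -1)) := by
  have h1α : (0:ℝ) < 1 + α := by linarith
  have ha : (0:ℝ) ≤ α / (1 + α) := by positivity
  have hb : (0:ℝ) ≤ 1 / (1 + α) := by positivity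
  have hsa : Real.sqrt (α / (1 + α)) ^ 2 = α / (1 + α) := Real.sq_sqrt ha
  have hsb : Real.sqrt (1 / (1 + α)) ^ 2 = 1 / (1 + α) := Real.sq_sqrt hb
  constructor
  · rintro ⟨hs, h1, h2, h3⟩
    rcases mul_eq_zero.mp h1 with hx | hz
    · -- x = 0
      have hy : y = 0 ∨ z = 0 := by
        rcases mul_eq_zero.mp h2 with h | h
        · left
          rcases mul_eq_zero.mp h with h' | h'
          · exact absurd h' (by simp [hα.ne'])
          · exact h'
        · right; exact h
      rcases hy with hy | hz
      · right
        refine ⟨hx, hy, ?_⟩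
        have : z ^ 2 = 1 := by nlinarith
        have hf : (z - 1) * (z + 1) = 0 := by nlinarith
        rcases mul_eq_zero.mp hf with h | h
        · left; linarith
        · right; linarith
      · -- x = 0, z = 0, then αy² = 0 so y = 0, but sum = 0 ≠ 1
        exfalso
        have hy0 : y = 0 := by nlinarith
        rw [hx, hy0, hz] at hs; norm_num at hs
    · -- z = 0
      left
      have hy2 : y ^ 2 = 1 / (1 + α) := by
        field_simp
        nlinarith
      have hx2 : x ^ 2 = α / (1 + α) := by
        field_simp
        nlinarith [hy2]
      refine ⟨?_, ?_, hz⟩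
      · have : x ^ 2 = Real.sqrt (α / (1 + α)) ^ 2 := by rw [hsa, hx2]
        rcases sq_eq_sq_iff_eq_or_eq_neg.mp this with h | h
        · left; exact h
        · right; exact h
      · have : y ^ 2 = Real.sqrt (1 / (1 + α)) ^ 2 := by rw [hsb, hy2]
        rcases sq_eq_sq_iff_eq_or_eq_neg.mp this with h | h
        · left; exact h
        · right; exact h
  · rintro (⟨hx, hy, hz⟩ | ⟨hx, hy, hz⟩)
    · have hx2 : x ^ 2 = α / (1 + α) := by
        rcases hx with h | h <;> rw [h] <;> simp [hsa, neg_pow]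
      have hy2 : y ^ 2 = 1 / (1 + α) := by
        rcases hy with h | h <;> rw [h] <;> simp [hsb, neg_pow, Real.sq_sqrt h1α.le]
      subst hz
      refine ⟨?_, by ring, by ring, ?_⟩
      · rw [hx2, hy2]; field_simp; try ring
      · rw [hx2, hy2]; field_simp; try ring
    · subst hx; subst hy
      rcases hz with h | h <;> subst h <;> norm_num
end

section
/- (Hermite–Hadamard for log-convex functions) If f : [a,b] → ℝ is positive, continuous, and log-convex on [a,b] with f(a) ≠ f(b), then (1/(b-a)) · ∫ₐᵇ f(s) ds ≤ (f(b) - f(a)) / (log f(b) - log f(a)). -/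
open Real

/-- Hermite–Hadamard inequality for log-convex functions: if `f` is positive,
continuous, and log-convex on `[a,b]` with `f a ≠ f b`, then
`(1/(b-a)) ∫ₐᵇ f ≤ (f b - f a) / (log (f b) - log (f a))`. -/
theorem stmt7 (a b : ℝ) (hab : a < b) (f : ℝ → ℝ)
    (hf : ContinuousOn f (Set.Icc a b))
    (hpos : ∀ x ∈ Set.Icc a b, 0 < f x)
    (hconv : ConvexOn ℝ (Set.Icc a b) (fun x => Real.log (f x)))
    (hne : f a ≠ f b) :
    (1 / (b - a)) * ∫ s in a..b, f s ≤
      (f b - f a) / (Real.log (f b) - Real.log (f a)) := by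
  have hba : (0:ℝ) < b - a := sub_pos.2 hab
  have hfa : 0 < f a := hpos a (Set.left_mem_Icc.2 hab.le)
  have hfb : 0 < f b := hpos b (Set.right_mem_Icc.2 hab.le)
  set L : ℝ := Real.log (f b) - Real.log (f a) with hL
  have hLne : L ≠ 0 := by
    intro h
    apply hne
    have := sub_eq_zero.mp h
    exact (Real.log_injOn_pos (Set.mem_Ioi.2 hfa) (Set.mem_Ioi.2 hfb) this.symm)
  set m : ℝ := L / (b - a) with hm
  have hmne : m ≠ 0 := div_ne_zero hLne hba.ne'
  set g : ℝ → ℝ := fun x => Real.exp (Real.log (f a) + m * (x - a)) with hg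
  -- pointwise bound f ≤ g on Icc a b
  have hfg : ∀ x ∈ Set.Icc a b, f x ≤ g x := by
    intro x hx
    have hxa := hx.1
    have hxb := hx.2
    have h1 : (0:ℝ) ≤ (b - x) / (b - a) := div_nonneg (by linarith) hba.le
    have h2 : (0:ℝ) ≤ (x - a) / (b - a) := div_nonneg (by linarith) hba.le
    have hsum : (b - x) / (b - a) + (x - a) / (b - a) = 1 := by
      field_simp
      ring
    have hc := hconv.2 (Set.left_mem_Icc.2 hab.le) (Set.right_mem_Icc.2 hab.le) h1 h2 hsum
    have hpt : ((b - x) / (b - a)) • a + ((x - a) / (b - a)) • b = x := by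
      simp only [smul_eq_mul]
      rw [div_mul_eq_mul_div, div_mul_eq_mul_div, ← add_div, div_eq_iff hba.ne']
      ring
    rw [hpt] at hc
    simp only [smul_eq_mul] at hc
    have hlog : Real.log (f x) ≤ Real.log (f a) + m * (x - a) := by
      have : (b - x) / (b - a) * Real.log (f a) + (x - a) / (b - a) * Real.log (f b)
          = Real.log (f a) + m * (x - a) := by
        rw [hm, hL]; field_simp; ring
      linarith [hc, this.symm.le]
    calc f x = Real.exp (Real.log (f x)) := (Real.exp_log (hpos x hx)).symm
      _ ≤ g x := Real.exp_le_exp.2 hlog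
  -- integrability
  have hfint : IntervalIntegrable f MeasureTheory.volume a b := by
    have huI : Set.uIcc a b = Set.Icc a b := Set.uIcc_of_le hab.le
    exact (huI ▸ hf).intervalIntegrable
  have hgc : Continuous g := by
    apply Real.continuous_exp.comp; continuity
  have hgint : IntervalIntegrable g MeasureTheory.volume a b := hgc.intervalIntegrable a b
  -- integral bound
  have hint : ∫ s in a..b, f s ≤ ∫ s in a..b, g s := by
    apply intervalIntegral.integral_mono_on hab.le hfint hgint hfg
  -- compute ∫ g
  have hgval : ∫ s in a..b, g s = (f b - f a) / m := by
    have : ∀ x, g x = Real.exp (m * x + (Real.log (f a) - m * a)) := by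
      intro x; rw [hg]; ring_nf
    simp only [this]
    rw [intervalIntegral.integral_comp_mul_add Real.exp hmne (Real.log (f a) - m * a),
      integral_exp]
    have e1 : m * b + (Real.log (f a) - m * a) = Real.log (f a) + L := by
      rw [hm]; field_simp; ring
    have e2 : m * a + (Real.log (f a) - m * a) = Real.log (f a) := by ring
    rw [e1, e2, hL]
    rw [Real.exp_add, Real.exp_sub, Real.exp_log hfa, Real.exp_log hfb, smul_eq_mul]
    field_simp
  have : ∫ s in a..b, f s ≤ (f b - f a) / m := hgval ▸ hint
  calc (1 / (b - a)) * ∫ s in a..b, f s ≤ (1 / (b - a)) * ((f b - f a) / m) := by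
        apply mul_le_mul_of_nonneg_left this (by positivity)
    _ = (f b - f a) / L := by
        rw [hm]
        field_simp
end

section
/- The function τ(s) = 2/(C + √(C²-4)·sin(2(s+k))), for real constants k and C ≥ 2, satisfies the stationary equation τ^{-1/2} - τ^{3/2} + d²/ds²(τ^{-1/2}) = constant (i.e., its derivative is zero), hence is a stationary solution of τ_t = D_s(τ^{-1/2} - τ^{3/2} + D_s²(τ^{-1/2})). -/
/-- For `C ≥ 2` and `k ∈ ℝ`, the function
`τ(s) = 2/(C + √(C²-4)·sin(2(s+k)))` is a stationary solution of
`τ_t = D_s(τ^{-1/2} - τ^{3/2} + D_s²(τ^{-1/2}))`: the derivative of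
`τ^{-1/2} - τ^{3/2} + D_s²(τ^{-1/2})` vanishes identically. -/
theorem stmt9 (k C : ℝ) (hC : 2 ≤ C) :
    let τ : ℝ → ℝ := fun s => 2 / (C + Real.sqrt (C ^ 2 - 4) * Real.sin (2 * (s + k)))
    ∀ s : ℝ,
      deriv (fun r => (τ r) ^ (-(1 : ℝ) / 2) - (τ r) ^ ((3 : ℝ) / 2)
        + deriv (deriv (fun p => (τ p) ^ (-(1 : ℝ) / 2))) r) s = 0 := by
  intro τ s
  have hC4 : (0:ℝ) ≤ C ^ 2 - 4 := by nlinarith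
  set a : ℝ := Real.sqrt (C ^ 2 - 4) with ha_def
  have ha : 0 ≤ a := Real.sqrt_nonneg _
  have ha2 : a ^ 2 = C ^ 2 - 4 := Real.sq_sqrt hC4
  -- positivity of the denominator
  have hf : ∀ p : ℝ, 0 < C + a * Real.sin (2 * (p + k)) := by
    intro p
    have h1 : -1 ≤ Real.sin (2 * (p + k)) := Real.neg_one_le_sin _
    have haC : a < C := by nlinarith
    nlinarith
  set f : ℝ → ℝ := fun p => C + a * Real.sin (2 * (p + k)) with hf_def
  -- rewrite τ^{-1/2} as √(f/2)
  have hg : (fun p => (τ p) ^ (-(1 : ℝ) / 2)) = fun p => Real.sqrt (f p / 2) := by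
    funext p
    have hfp := hf p
    have h2f : (0:ℝ) < 2 / f p := by positivity
    have : (τ p) ^ (-(1 : ℝ) / 2) = ((2 / f p) ^ ((1:ℝ)/2))⁻¹ := by
      rw [show (-(1:ℝ)/2) = -((1:ℝ)/2) by ring, Real.rpow_neg h2f.le]
    rw [this, ← Real.sqrt_eq_rpow]
    have hmul : Real.sqrt (2 / f p) * Real.sqrt (f p / 2) = 1 := by
      rw [← Real.sqrt_mul h2f.le]
      rw [show 2 / f p * (f p / 2) = 1 by field_simp [show f p ≠ 0 from hfp.ne']]
      exact Real.sqrt_one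
    exact inv_eq_of_mul_eq_one_right hmul
  -- first derivative of √(f/2)
  have hd1 : ∀ p : ℝ, HasDerivAt (fun q => Real.sqrt (f q / 2))
      (a * Real.cos (2 * (p + k)) / (2 * Real.sqrt (f p / 2))) p := by
    intro p
    have hlin : HasDerivAt (fun q : ℝ => 2 * (q + k)) 2 p := by
      simpa using ((hasDerivAt_id p).add_const k).const_mul 2
    have hsin := hlin.sin
    have hin : HasDerivAt (fun q => f q / 2) (a * (Real.cos (2 * (p + k)) * 2) / 2) p :=
      ((hsin.const_mul a).const_add C).div_const 2
    have hne : f p / 2 ≠ 0 := by have := hf p; positivity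
    have := hin.sqrt hne
    convert this using 1
    ring
  have hG1 : deriv (fun q => Real.sqrt (f q / 2))
      = fun p => a * Real.cos (2 * (p + k)) / (2 * Real.sqrt (f p / 2)) :=
    funext fun p => (hd1 p).deriv
  -- the expression is identically zero
  have hzero : (fun r => (τ r) ^ (-(1 : ℝ) / 2) - (τ r) ^ ((3 : ℝ) / 2)
      + deriv (deriv (fun p => (τ p) ^ (-(1 : ℝ) / 2))) r) = fun _ => (0:ℝ) := by
    funext r
    rw [hg, hG1]
    -- second derivative at r
    set S : ℝ := Real.sqrt (f r / 2) with hS_def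
    have hfr := hf r
    have hS2 : S ^ 2 = f r / 2 := Real.sq_sqrt (by positivity)
    have hSpos : 0 < S := Real.sqrt_pos.mpr (by positivity)
    have hlin : HasDerivAt (fun q : ℝ => 2 * (q + k)) 2 r := by
      simpa using ((hasDerivAt_id r).add_const k).const_mul 2
    have hu : HasDerivAt (fun p => a * Real.cos (2 * (p + k)))
        (a * (-Real.sin (2 * (r + k)) * 2)) r := hlin.cos.const_mul a
    have hv : HasDerivAt (fun p => 2 * Real.sqrt (f p / 2)) (2 * (a * Real.cos (2 * (r + k)) / (2 * S))) r :=
      (hd1 r).const_mul 2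
    have hvne : 2 * S ≠ 0 := by positivity
    have hdd : HasDerivAt (fun p => a * Real.cos (2 * (p + k)) / (2 * Real.sqrt (f p / 2)))
        ((a * (-Real.sin (2 * (r + k)) * 2) * (2 * S)
          - a * Real.cos (2 * (r + k)) * (2 * (a * Real.cos (2 * (r + k)) / (2 * S)))) / (2 * S) ^ 2) r := by
      have := hu.div hv hvne
      exact this
    rw [hdd.deriv]
    -- rewrite the rpows
    have hτr : τ r = 2 / f r := rfl
    have hτhalf : (τ r) ^ (-(1:ℝ)/2) = S := by
      have := congrFun hg r
      simpa [← hS_def] using this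
    have h2f : (0:ℝ) < 2 / f r := by positivity
    have hsqrt2f : Real.sqrt (2 / f r) = S⁻¹ := by
      have hmul : Real.sqrt (2 / f r) * S = 1 := by
        rw [hS_def, ← Real.sqrt_mul h2f.le, show 2 / f r * (f r / 2) = 1 by field_simp [show f r ≠ 0 from hfr.ne']]
        exact Real.sqrt_one
      exact eq_inv_of_mul_eq_one_left hmul
    have hτ32 : (τ r) ^ ((3:ℝ)/2) = (S⁻¹) ^ (3:ℕ) := by
      rw [hτr, show ((3:ℝ)/2) = ((1:ℝ)/2) * ((3:ℕ):ℝ) by norm_num,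
        Real.rpow_mul h2f.le, Real.rpow_natCast, ← Real.sqrt_eq_rpow, hsqrt2f]
    rw [hτhalf, hτ32]
    -- now pure algebra
    have hsc : Real.sin (2 * (r + k)) ^ 2 + Real.cos (2 * (r + k)) ^ 2 = 1 :=
      Real.sin_sq_add_cos_sq _
    have hfr_eq : f r = C + a * Real.sin (2 * (r + k)) := rfl
    set si := Real.sin (2 * (r + k))
    set co := Real.cos (2 * (r + k))
    have hS2' : 2 * S ^ 2 = C + a * si := by rw [hS2, hfr_eq]; ring
    field_simp
    linear_combination (2*S^2 - a*si + C) * hS2' - ha2 - a^2 * hsc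
  rw [hzero]
  simp
end

section
/- Suppose (x,y,z,a,b) : ℝ → ℝ⁵ satisfies x' = -xz, y' = αyz, z' = x² - αy², a' = 2x + az, b' = 2y - αbz with initial conditions z(0) = 0, a(0) = 0, b(0) = 0. Then the identity a(t)·x(t) - α·b(t)·y(t) = 2z(t) holds for all t. -/
/-- For solutions of `x' = -xz`, `y' = αyz`, `z' = x² - αy²`, `a' = 2x + az`,
`b' = 2y - αbz` with `z(0) = a(0) = b(0) = 0`, we have `ax - αby = 2z` for all `t`. -/
theorem stmt15 (α : ℝ) (hα : 0 < α) (x y z a b : ℝ → ℝ)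
    (hx : ∀ t, HasDerivAt x (-(x t) * z t) t)
    (hy : ∀ t, HasDerivAt y (α * y t * z t) t)
    (hz : ∀ t, HasDerivAt z ((x t) ^ 2 - α * (y t) ^ 2) t)
    (ha : ∀ t, HasDerivAt a (2 * x t + a t * z t) t)
    (hb : ∀ t, HasDerivAt b (2 * y t - α * b t * z t) t)
    (hz0 : z 0 = 0) (ha0 : a 0 = 0) (hb0 : b 0 = 0) :
    ∀ t : ℝ, a t * x t - α * b t * y t = 2 * z t := by
  set F : ℝ → ℝ := fun t => a t * x t - α * b t * y t - 2 * z t with hF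
  have hF' : ∀ t, HasDerivAt F 0 t := by
    intro t
    have h := (((ha t).mul (hx t)).sub ((hasDerivAt_const t α).mul ((hb t).mul (hy t)))).sub
      ((hasDerivAt_const t (2:ℝ)).mul (hz t))
    convert h using 1
    · rfl
    · rfl
    · funext s; simp only [hF, Pi.mul_apply, Pi.sub_apply]; ring
    · ring
  have hconst : ∀ t, F t = F 0 := by
    intro t
    have : ∀ s, deriv F s = 0 := fun s => (hF' s).deriv
    exact is_const_of_deriv_eq_zero (fun s => (hF' s).differentiableAt) this t 0
  intro t
  have h0 : F 0 = 0 := by simp [hF, hz0, ha0, hb0]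
  have := hconst t
  rw [h0] at this
  simpa [hF, sub_eq_zero] using this
end
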